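/- The Wasserstein-1 distance between two probability distributions on ℝ with finite first moments equals the integral of the absolute difference of their cumulative distribution functions: W₁(μ, ν) = ∫_ℝ |F_μ(t) − F_ν(t)| dt. -/

import Mathlib

open MeasureTheory

/-- The Wasserstein-1 distance between Borel probability measures on `ℝ`:
the infimum over couplings `γ` (measures on `ℝ × ℝ` with marginals `μ` and `ν`)
of `∫ |x − y| dγ`. -/
noncomputable def W1 (μ ν : Measure ℝ) : ℝ :=
  sInf {c : ℝ | ∃ γ : Measure (ℝ × ℝ),
    γ.map Prod.fst = μ ∧ γ.map Prod.snd = ν ∧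
    c = ∫ p, |p.1 - p.2| ∂γ}

open MeasureTheory Set Filter ProbabilityTheory Topology
open scoped ENNReal NNReal
open scoped ENNReal NNReal

lemma mem_symIco_iff (x y t : ℝ) :
    ((x ≤ t ∧ ¬ y ≤ t) ∨ (y ≤ t ∧ ¬ x ≤ t)) ↔ min x y ≤ t ∧ t < max x y := by
  simp only [not_le, min_le_iff, lt_max_iff]
  constructor
  · rintro (⟨h1, h2⟩ | ⟨h1, h2⟩) <;> constructor <;> [left; right; right; left] <;> assumption
  · rintro ⟨h1 | h1, h2 | h2⟩
    · linarith
    · exact Or.inl ⟨h1, h2⟩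
    · exact Or.inr ⟨h1, h2⟩
    · linarith

lemma mem_symIoc_iff (a b u : ℝ) :
    ((u ≤ a ∧ ¬ u ≤ b) ∨ (u ≤ b ∧ ¬ u ≤ a)) ↔ min a b < u ∧ u ≤ max a b := by
  simp only [not_le, min_lt_iff, le_max_iff]
  constructor
  · rintro (⟨h1, h2⟩ | ⟨h1, h2⟩) <;> constructor <;> [right; left; left; right] <;> assumption
  · rintro ⟨h1 | h1, h2 | h2⟩
    · linarith
    · exact Or.inr ⟨h2, h1⟩
    · exact Or.inl ⟨h2, h1⟩
    · linarith

lemma vol_symIco (x y : ℝ) :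
    volume {t : ℝ | (x ≤ t ∧ ¬ y ≤ t) ∨ (y ≤ t ∧ ¬ x ≤ t)} = ENNReal.ofReal |x - y| := by
  have h : {t : ℝ | (x ≤ t ∧ ¬ y ≤ t) ∨ (y ≤ t ∧ ¬ x ≤ t)} = Set.Ico (min x y) (max x y) := by
    ext t; exact (mem_symIco_iff x y t)
  rw [h, Real.volume_Ico, max_sub_min_eq_abs, abs_sub_comm]

lemma lintegral_abs_sub {α : Type*} [MeasurableSpace α] (P : Measure α) [SFinite P]
    {f g : α → ℝ} (hf : Measurable f) (hg : Measurable g) :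
    ∫⁻ a, ENNReal.ofReal |f a - g a| ∂P
      = ∫⁻ t, P {a | (f a ≤ t ∧ ¬ g a ≤ t) ∨ (g a ≤ t ∧ ¬ f a ≤ t)} ∂volume := by
  set s : Set (α × ℝ) :=
    {q | (f q.1 ≤ q.2 ∧ ¬ g q.1 ≤ q.2) ∨ (g q.1 ≤ q.2 ∧ ¬ f q.1 ≤ q.2)} with hs_def
  have hA : MeasurableSet {q : α × ℝ | f q.1 ≤ q.2} :=
    measurableSet_le (hf.comp measurable_fst) measurable_snd
  have hB : MeasurableSet {q : α × ℝ | g q.1 ≤ q.2} :=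
    measurableSet_le (hg.comp measurable_fst) measurable_snd
  have hs : MeasurableSet s := by
    have : s = ({q : α × ℝ | f q.1 ≤ q.2} \ {q | g q.1 ≤ q.2}) ∪
        ({q : α × ℝ | g q.1 ≤ q.2} \ {q | f q.1 ≤ q.2}) := rfl
    rw [this]; exact (hA.diff hB).union (hB.diff hA)
  have key1 : ∀ a : α, ∫⁻ t, s.indicator 1 (a, t) = ENNReal.ofReal |f a - g a| := by
    intro a
    have h1 : (fun t => s.indicator 1 (a, t)) = (Prod.mk a ⁻¹' s).indicator (1 : ℝ → ℝ≥0∞) := by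
      ext t; by_cases h : (a, t) ∈ s <;> simp [h, Set.indicator_of_mem, Set.indicator_of_notMem]
    rw [h1, lintegral_indicator_one (measurable_prodMk_left hs)]
    exact vol_symIco (f a) (g a)
  calc ∫⁻ a, ENNReal.ofReal |f a - g a| ∂P
      = ∫⁻ a, ∫⁻ t, s.indicator 1 (a, t) ∂volume ∂P := by
        exact lintegral_congr fun a => (key1 a).symm
    _ = ∫⁻ t, ∫⁻ a, s.indicator 1 (a, t) ∂P ∂volume := by
        exact lintegral_lintegral_swap ((measurable_one.indicator hs).aemeasurable)
    _ = ∫⁻ t, P {a | (f a ≤ t ∧ ¬ g a ≤ t) ∨ (g a ≤ t ∧ ¬ f a ≤ t)} ∂volume := by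
        refine lintegral_congr fun t => ?_
        have h1 : (fun a => s.indicator 1 (a, t)) = ((fun a => (a, t)) ⁻¹' s).indicator (1 : α → ℝ≥0∞) := by
          ext a; by_cases h : (a, t) ∈ s <;>
            simp [h, Set.indicator_of_mem, Set.indicator_of_notMem]
        rw [h1, lintegral_indicator_one (measurable_prodMk_right hs)]
        rfl

noncomputable def qf (μ : Measure ℝ) : ℝ → ℝ :=
  fun u => if u ∈ Set.Ioo (0:ℝ) 1 then sInf {x | u ≤ cdf μ x} else 0

variable (μ : Measure ℝ) [IsProbabilityMeasure μ]

lemma qf_le_iff {u : ℝ} (hu : u ∈ Set.Ioo (0:ℝ) 1) (t : ℝ) :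
    qf μ u ≤ t ↔ u ≤ cdf μ t := by
  have hne : {x | u ≤ cdf μ x}.Nonempty :=
    ((tendsto_cdf_atTop μ).eventually (eventually_ge_nhds hu.2)).exists
  have hbdd : BddBelow {x | u ≤ cdf μ x} := by
    obtain ⟨x₀, hx₀⟩ := ((tendsto_cdf_atBot μ).eventually (eventually_lt_nhds hu.1)).exists
    exact ⟨x₀, fun x hx => le_of_not_gt fun hlt =>
      absurd (le_trans hx ((monotone_cdf μ) hlt.le)) (not_le.2 hx₀)⟩
  rw [qf, if_pos hu]
  constructor
  · intro h
    have key : ∀ x ∈ Set.Ioi t, u ≤ cdf μ x := by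
      intro x hx
      obtain ⟨s, hs, hst⟩ := exists_lt_of_csInf_lt hne (lt_of_le_of_lt h hx)
      exact le_trans hs ((monotone_cdf μ) hst.le)
    have hrc : Filter.Tendsto (cdf μ) (nhdsWithin t (Set.Ioi t)) (nhds (cdf μ t)) :=
      ((cdf μ).right_continuous t).tendsto.mono_left
        (nhdsWithin_mono t Set.Ioi_subset_Ici_self)
    exact ge_of_tendsto hrc (eventually_nhdsWithin_of_forall key)
  · exact fun h => csInf_le hbdd h

lemma measurable_qf : Measurable (qf μ) := by
  apply measurable_of_Iic
  intro t
  by_cases ht : (0:ℝ) ≤ t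
  · have h : qf μ ⁻¹' Set.Iic t = (Set.Ioo 0 1 ∩ Set.Iic (cdf μ t)) ∪ (Set.Ioo (0:ℝ) 1)ᶜ := by
      ext u
      by_cases hu : u ∈ Set.Ioo (0:ℝ) 1
      · simp [Set.mem_preimage, qf_le_iff μ hu t, hu]
      · simp [Set.mem_preimage, qf, hu, ht]
    rw [h]
    exact (measurableSet_Ioo.inter measurableSet_Iic).union measurableSet_Ioo.compl
  · have h : qf μ ⁻¹' Set.Iic t = Set.Ioo 0 1 ∩ Set.Iic (cdf μ t) := by
      ext u
      by_cases hu : u ∈ Set.Ioo (0:ℝ) 1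
      · simp [Set.mem_preimage, qf_le_iff μ hu t, hu]
      · simp [Set.mem_preimage, qf, hu, ht]
    rw [h]
    exact measurableSet_Ioo.inter measurableSet_Iic

lemma map_qf : Measure.map (qf μ) (volume.restrict (Set.Ioo 0 1)) = μ := by
  have hmeas := measurable_qf μ
  refine Measure.ext_of_Iic _ _ fun t => ?_
  rw [Measure.map_apply hmeas measurableSet_Iic,
    Measure.restrict_apply (hmeas measurableSet_Iic)]
  have hle1 := cdf_le_one μ t
  have hge0 := cdf_nonneg μ t
  have hsub1 : Set.Ioo 0 (cdf μ t) ⊆ qf μ ⁻¹' Set.Iic t ∩ Set.Ioo 0 1 := by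
    intro u hu
    have hu' : u ∈ Set.Ioo (0:ℝ) 1 := ⟨hu.1, lt_of_lt_of_le hu.2 hle1⟩
    exact ⟨(qf_le_iff μ hu' t).2 hu.2.le, hu'⟩
  have hsub2 : qf μ ⁻¹' Set.Iic t ∩ Set.Ioo 0 1 ⊆ Set.Ioc 0 (cdf μ t) := by
    rintro u ⟨h1, h2⟩
    exact ⟨h2.1, (qf_le_iff μ h2 t).1 h1⟩
  have h1 := measure_mono (μ := volume) hsub1
  have h2 := measure_mono (μ := volume) hsub2
  rw [Real.volume_Ioo, sub_zero] at h1
  rw [Real.volume_Ioc, sub_zero] at h2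
  rw [← ofReal_cdf μ t]
  exact le_antisymm h2 h1

instance : IsProbabilityMeasure (volume.restrict (Set.Ioo (0:ℝ) 1)) :=
  ⟨by simp [Real.volume_Ioo]⟩

/-- For probability measures on `ℝ` with finite first moments, the Wasserstein-1
distance equals the `L¹` distance between the cumulative distribution functions:
`W₁(μ, ν) = ∫ |F_μ(t) − F_ν(t)| dt`. -/
theorem w1_eq_integral_cdf_diff (μ ν : Measure ℝ)
    [IsProbabilityMeasure μ] [IsProbabilityMeasure ν]
    (hμ : Integrable (fun x => |x|) μ) (hν : Integrable (fun x => |x|) ν) :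
    W1 μ ν = ∫ t, |(μ (Set.Iic t)).toReal - (ν (Set.Iic t)).toReal| := by
  have hFmeas : Measurable (fun t => cdf μ t) := (monotone_cdf μ).measurable
  have hGmeas : Measurable (fun t => cdf ν t) := (monotone_cdf ν).measurable
  set L' : ℝ≥0∞ := ∫⁻ t, ENNReal.ofReal |cdf μ t - cdf ν t| with hL'def
  have hI : ∫ t, |(μ (Set.Iic t)).toReal - (ν (Set.Iic t)).toReal| = L'.toReal := by
    have heq : (fun t => |(μ (Set.Iic t)).toReal - (ν (Set.Iic t)).toReal|)
        = fun t => |cdf μ t - cdf ν t| := by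
      funext t; rw [cdf_eq_real, cdf_eq_real, measureReal_def, measureReal_def]
    rw [heq]
    exact integral_eq_lintegral_of_nonneg_ae (ae_of_all _ fun t => abs_nonneg _)
      ((hFmeas.sub hGmeas).abs).aestronglyMeasurable
  set P := volume.restrict (Set.Ioo (0:ℝ) 1) with hPdef
  have hpair : Measurable (fun u => (qf μ u, qf ν u)) :=
    (measurable_qf μ).prodMk (measurable_qf ν)
  set γ₀ := P.map (fun u => (qf μ u, qf ν u)) with hγ₀
  have habs : Measurable (fun p : ℝ × ℝ => ENNReal.ofReal |p.1 - p.2|) :=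
    (measurable_fst.sub measurable_snd).abs.ennreal_ofReal
  have hm1 : γ₀.map Prod.fst = μ := by
    rw [hγ₀, Measure.map_map measurable_fst hpair]
    exact map_qf μ
  have hm2 : γ₀.map Prod.snd = ν := by
    rw [hγ₀, Measure.map_map measurable_snd hpair]
    exact map_qf ν
  have hcost : ∫⁻ p, ENNReal.ofReal |p.1 - p.2| ∂γ₀ = L' := by
    calc ∫⁻ p, ENNReal.ofReal |p.1 - p.2| ∂γ₀
        = ∫⁻ u, ENNReal.ofReal |qf μ u - qf ν u| ∂P := lintegral_map habs hpair
      _ = ∫⁻ t, P {u | (qf μ u ≤ t ∧ ¬ qf ν u ≤ t) ∨ (qf ν u ≤ t ∧ ¬ qf μ u ≤ t)} ∂volume :=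
          lintegral_abs_sub P (measurable_qf μ) (measurable_qf ν)
      _ = L' := by
          refine lintegral_congr fun t => ?_
          have hqA : MeasurableSet {u : ℝ | qf μ u ≤ t} :=
            measurableSet_le (measurable_qf μ) measurable_const
          have hqB : MeasurableSet {u : ℝ | qf ν u ≤ t} :=
            measurableSet_le (measurable_qf ν) measurable_const
          have hset : MeasurableSet
              {u : ℝ | (qf μ u ≤ t ∧ ¬ qf ν u ≤ t) ∨ (qf ν u ≤ t ∧ ¬ qf μ u ≤ t)} := by
            have heq : {u : ℝ | (qf μ u ≤ t ∧ ¬ qf ν u ≤ t) ∨ (qf ν u ≤ t ∧ ¬ qf μ u ≤ t)}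
                = ({u : ℝ | qf μ u ≤ t} \ {u | qf ν u ≤ t}) ∪
                  ({u : ℝ | qf ν u ≤ t} \ {u | qf μ u ≤ t}) := rfl
            rw [heq]; exact (hqA.diff hqB).union (hqB.diff hqA)
          rw [hPdef, Measure.restrict_apply hset]
          have ha0 : (0:ℝ) ≤ cdf μ t := cdf_nonneg μ t
          have hb0 : (0:ℝ) ≤ cdf ν t := cdf_nonneg ν t
          have ha1 : cdf μ t ≤ 1 := cdf_le_one μ t
          have hb1 : cdf ν t ≤ 1 := cdf_le_one ν t
          have hsub1 : Set.Ioo (min (cdf μ t) (cdf ν t)) (max (cdf μ t) (cdf ν t)) ⊆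
              {u : ℝ | (qf μ u ≤ t ∧ ¬ qf ν u ≤ t) ∨ (qf ν u ≤ t ∧ ¬ qf μ u ≤ t)}
                ∩ Set.Ioo 0 1 := by
            intro u hu
            have hu' : u ∈ Set.Ioo (0:ℝ) 1 :=
              ⟨lt_of_le_of_lt (le_min ha0 hb0) hu.1, lt_of_lt_of_le hu.2 (max_le ha1 hb1)⟩
            refine ⟨?_, hu'⟩
            rcases (mem_symIoc_iff (cdf μ t) (cdf ν t) u).2 ⟨hu.1, hu.2.le⟩ with
              ⟨h1, h2⟩ | ⟨h1, h2⟩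
            · exact Or.inl ⟨(qf_le_iff μ hu' t).2 h1, fun hc => h2 ((qf_le_iff ν hu' t).1 hc)⟩
            · exact Or.inr ⟨(qf_le_iff ν hu' t).2 h1, fun hc => h2 ((qf_le_iff μ hu' t).1 hc)⟩
          have hsub2 : {u : ℝ | (qf μ u ≤ t ∧ ¬ qf ν u ≤ t) ∨ (qf ν u ≤ t ∧ ¬ qf μ u ≤ t)}
              ∩ Set.Ioo 0 1 ⊆ Set.Ioc (min (cdf μ t) (cdf ν t)) (max (cdf μ t) (cdf ν t)) := by
            rintro u ⟨h1, hu'⟩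
            refine (mem_symIoc_iff (cdf μ t) (cdf ν t) u).1 ?_
            rcases h1 with ⟨h1, h2⟩ | ⟨h1, h2⟩
            · exact Or.inl ⟨(qf_le_iff μ hu' t).1 h1, fun hc => h2 ((qf_le_iff ν hu' t).2 hc)⟩
            · exact Or.inr ⟨(qf_le_iff ν hu' t).1 h1, fun hc => h2 ((qf_le_iff μ hu' t).2 hc)⟩
          have h1 := measure_mono (μ := volume) hsub1
          have h2 := measure_mono (μ := volume) hsub2
          rw [Real.volume_Ioo, max_sub_min_eq_abs, abs_sub_comm] at h1
          rw [Real.volume_Ioc, max_sub_min_eq_abs, abs_sub_comm] at h2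
          exact le_antisymm h2 h1
  haveI hγ₀prob : IsProbabilityMeasure γ₀ := Measure.isProbabilityMeasure_map hpair.aemeasurable
  have hc₀ : ∫ p, |p.1 - p.2| ∂γ₀ = L'.toReal := by
    rw [integral_eq_lintegral_of_nonneg_ae (ae_of_all _ fun p : ℝ × ℝ => abs_nonneg (p.1 - p.2))
      ((measurable_fst.sub measurable_snd).abs).aestronglyMeasurable, hcost]
  have hlb : ∀ c ∈ {c : ℝ | ∃ γ : Measure (ℝ × ℝ), γ.map Prod.fst = μ ∧ γ.map Prod.snd = ν ∧
      c = ∫ p, |p.1 - p.2| ∂γ}, L'.toReal ≤ c := by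
    rintro c ⟨γ, h1, h2, rfl⟩
    haveI : IsProbabilityMeasure γ := by
      constructor
      have h := Measure.map_apply (μ := γ) measurable_fst MeasurableSet.univ
      rw [Set.preimage_univ, h1] at h
      rw [← h, measure_univ]
    set L : ℝ≥0∞ := ∫⁻ p, ENNReal.ofReal |p.1 - p.2| ∂γ with hLdef
    have hμfin : ∫⁻ x, ENNReal.ofReal |x| ∂μ < ∞ := by
      have h := hμ.hasFiniteIntegral
      simpa [HasFiniteIntegral, Real.enorm_eq_ofReal_abs, abs_abs] using h
    have hνfin : ∫⁻ x, ENNReal.ofReal |x| ∂ν < ∞ := by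
      have h := hν.hasFiniteIntegral
      simpa [HasFiniteIntegral, Real.enorm_eq_ofReal_abs, abs_abs] using h
    have h1' : ∫⁻ p : ℝ × ℝ, ENNReal.ofReal |p.1| ∂γ = ∫⁻ x, ENNReal.ofReal |x| ∂μ := by
      rw [← h1]
      exact (lintegral_map (measurable_id.abs.ennreal_ofReal) measurable_fst).symm
    have h2' : ∫⁻ p : ℝ × ℝ, ENNReal.ofReal |p.2| ∂γ = ∫⁻ x, ENNReal.ofReal |x| ∂ν := by
      rw [← h2]
      exact (lintegral_map (measurable_id.abs.ennreal_ofReal) measurable_snd).symm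
    have hL_ne : L ≠ ∞ := by
      have hbound : ∀ p : ℝ × ℝ, ENNReal.ofReal |p.1 - p.2|
          ≤ ENNReal.ofReal |p.1| + ENNReal.ofReal |p.2| := by
        intro p
        rw [← ENNReal.ofReal_add (abs_nonneg _) (abs_nonneg _)]
        apply ENNReal.ofReal_le_ofReal
        have h := abs_add_le p.1 (-p.2)
        simpa [sub_eq_add_neg] using h
      have hfin : ∫⁻ p : ℝ × ℝ, ENNReal.ofReal |p.1| ∂γ
          + ∫⁻ p : ℝ × ℝ, ENNReal.ofReal |p.2| ∂γ ≠ ∞ := by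
        rw [h1', h2']
        exact (ENNReal.add_lt_top.2 ⟨hμfin, hνfin⟩).ne
      refine ne_top_of_le_ne_top hfin ?_
      refine le_trans (lintegral_mono hbound) (le_of_eq ?_)
      exact lintegral_add_left (measurable_fst.abs.ennreal_ofReal) _
    have hLeq : ∫ p, |p.1 - p.2| ∂γ = L.toReal :=
      integral_eq_lintegral_of_nonneg_ae (ae_of_all _ fun p : ℝ × ℝ => abs_nonneg (p.1 - p.2))
        ((measurable_fst.sub measurable_snd).abs).aestronglyMeasurable
    have hL'L : L' ≤ L := by
      rw [hLdef, lintegral_abs_sub γ measurable_fst measurable_snd]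
      refine lintegral_mono fun t => ?_
      have hA : γ {p : ℝ × ℝ | p.1 ≤ t} = μ (Set.Iic t) := by
        rw [← h1, Measure.map_apply measurable_fst measurableSet_Iic]; rfl
      have hB : γ {p : ℝ × ℝ | p.2 ≤ t} = ν (Set.Iic t) := by
        rw [← h2, Measure.map_apply measurable_snd measurableSet_Iic]; rfl
      have hsubA : {p : ℝ × ℝ | p.1 ≤ t} ⊆
          {p : ℝ × ℝ | (p.1 ≤ t ∧ ¬ p.2 ≤ t) ∨ (p.2 ≤ t ∧ ¬ p.1 ≤ t)} ∪ {p | p.2 ≤ t} := by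
        intro p hp
        by_cases hpb : p.2 ≤ t
        · exact Or.inr hpb
        · exact Or.inl (Or.inl ⟨hp, hpb⟩)
      have hsubB : {p : ℝ × ℝ | p.2 ≤ t} ⊆
          {p : ℝ × ℝ | (p.1 ≤ t ∧ ¬ p.2 ≤ t) ∨ (p.2 ≤ t ∧ ¬ p.1 ≤ t)} ∪ {p | p.1 ≤ t} := by
        intro p hp
        by_cases hpa : p.1 ≤ t
        · exact Or.inr hpa
        · exact Or.inl (Or.inr ⟨hp, hpa⟩)
      rcases le_total (cdf ν t) (cdf μ t) with hle | hle
      · rw [abs_of_nonneg (by linarith : (0:ℝ) ≤ cdf μ t - cdf ν t),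
          ENNReal.ofReal_sub _ (cdf_nonneg ν t), ofReal_cdf, ofReal_cdf, tsub_le_iff_right]
        calc μ (Set.Iic t) = γ {p : ℝ × ℝ | p.1 ≤ t} := hA.symm
          _ ≤ γ ({p : ℝ × ℝ | (p.1 ≤ t ∧ ¬ p.2 ≤ t) ∨ (p.2 ≤ t ∧ ¬ p.1 ≤ t)}
              ∪ {p | p.2 ≤ t}) := measure_mono hsubA
          _ ≤ γ {p : ℝ × ℝ | (p.1 ≤ t ∧ ¬ p.2 ≤ t) ∨ (p.2 ≤ t ∧ ¬ p.1 ≤ t)}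
              + γ {p : ℝ × ℝ | p.2 ≤ t} := measure_union_le _ _
          _ = γ {p : ℝ × ℝ | (p.1 ≤ t ∧ ¬ p.2 ≤ t) ∨ (p.2 ≤ t ∧ ¬ p.1 ≤ t)}
              + ν (Set.Iic t) := by rw [hB]
      · rw [abs_sub_comm, abs_of_nonneg (by linarith : (0:ℝ) ≤ cdf ν t - cdf μ t),
          ENNReal.ofReal_sub _ (cdf_nonneg μ t), ofReal_cdf, ofReal_cdf, tsub_le_iff_right]
        calc ν (Set.Iic t) = γ {p : ℝ × ℝ | p.2 ≤ t} := hB.symm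
          _ ≤ γ ({p : ℝ × ℝ | (p.1 ≤ t ∧ ¬ p.2 ≤ t) ∨ (p.2 ≤ t ∧ ¬ p.1 ≤ t)}
              ∪ {p | p.1 ≤ t}) := measure_mono hsubB
          _ ≤ γ {p : ℝ × ℝ | (p.1 ≤ t ∧ ¬ p.2 ≤ t) ∨ (p.2 ≤ t ∧ ¬ p.1 ≤ t)}
              + γ {p : ℝ × ℝ | p.1 ≤ t} := measure_union_le _ _
          _ = γ {p : ℝ × ℝ | (p.1 ≤ t ∧ ¬ p.2 ≤ t) ∨ (p.2 ≤ t ∧ ¬ p.1 ≤ t)}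
              + μ (Set.Iic t) := by rw [hA]
    calc L'.toReal ≤ L.toReal := ENNReal.toReal_mono hL_ne hL'L
      _ = ∫ p, |p.1 - p.2| ∂γ := hLeq.symm
  rw [hI, W1]
  refine le_antisymm (csInf_le ⟨L'.toReal, hlb⟩ ⟨γ₀, hm1, hm2, hc₀.symm⟩)
    (le_csInf ⟨_, ⟨γ₀, hm1, hm2, rfl⟩⟩ hlb)
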